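/- For the r-uniform hypergraph G_s^{(r)} consisting of two edges e, e' that intersect in exactly s vertices (2 ≤ s ≤ r−1), the weighted incidence matrix with B(v,f) = 1/2 for v ∈ e∩e' and B(v,f) = 1 for v ∈ f∖(e∩e') (f ∈ {e,e'}) satisfies: vertex sums equal 1, and each edge product equals (1/2)^s ≤ 1/4, with strict inequality iff s > 2. Consequently ρ(G_s^{(r)}) ≥ (r−1)!·4^{1/r}, with equality iff s = 2. -/

import Mathlib

open Finset

/-- Spectral radius of an `r`-uniform hypergraph with edge set `E`. -/
noncomputable def specRad (r : ℕ) {V : Type} [Fintype V] (E : Finset (Finset V)) : ℝ :=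
  sSup {ρ : ℝ | ∃ x : V → ℝ, (∀ v, 0 ≤ x v) ∧ x ≠ 0 ∧
    ρ = (Nat.factorial r : ℝ) * (∑ e ∈ E, ∏ v ∈ e, x v) / (∑ v, x v ^ r)}

private lemma four_rpow (r : ℕ) : (4 : ℝ) ^ ((1 : ℝ) / r) = (2 : ℝ) ^ ((2 : ℝ) / r) := by
  have h4 : (4 : ℝ) = (2 : ℝ) ^ (2 : ℝ) := by
    rw [show ((2 : ℝ) : ℝ) ^ (2 : ℝ) = (2 : ℝ) ^ ((2 : ℕ) : ℝ) by norm_num,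
      Real.rpow_natCast]; norm_num
  rw [h4, ← Real.rpow_mul (by norm_num)]
  ring_nf

/-- Weighted AM-GM bound for one edge. -/
private lemma edge_bound {V : Type} [DecidableEq V] (r s : ℕ) (hr : 0 < r)
    (t f : Finset V) (htf : t ⊆ f) (ht : t.card = s) (hf : f.card = r)
    (x : V → ℝ) (hx : ∀ v, 0 ≤ x v) :
    ∏ v ∈ f, x v ≤ (2 : ℝ) ^ ((s : ℝ) / r) / r *
      ∑ v ∈ f, x v ^ r * (if v ∈ t then (1/2 : ℝ) else 1) := by
  have hrR : (0 : ℝ) < r := by exact_mod_cast hr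
  set z : V → ℝ := fun v => x v ^ r * (if v ∈ t then (1/2 : ℝ) else 1) with hz_def
  have hz : ∀ v, 0 ≤ z v := by
    intro v
    apply mul_nonneg (pow_nonneg (hx v) r)
    split <;> norm_num
  have amgm := Real.geom_mean_le_arith_mean_weighted f (fun _ => (1 : ℝ) / r) z
    (fun i _ => by positivity)
    (by rw [Finset.sum_const, hf, nsmul_eq_mul]; field_simp)
    (fun i _ => hz i)
  have hprodz : ∏ v ∈ f, z v = (∏ v ∈ f, x v) ^ r * (1/2 : ℝ) ^ s := by
    rw [hz_def, Finset.prod_mul_distrib, Finset.prod_pow]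
    congr 1
    rw [Finset.prod_ite, Finset.prod_const, Finset.prod_const, one_pow, mul_one,
      Finset.filter_mem_eq_inter, Finset.inter_eq_right.mpr htf, ht]
  have hP : (0 : ℝ) ≤ ∏ v ∈ f, x v := Finset.prod_nonneg fun v _ => hx v
  have hlhs : ∏ v ∈ f, z v ^ ((1 : ℝ) / r)
      = (∏ v ∈ f, x v) * ((1/2 : ℝ) ^ s) ^ ((1 : ℝ) / r) := by
    rw [Real.finset_prod_rpow f z (fun i _ => hz i), hprodz,
      Real.mul_rpow (pow_nonneg hP r) (by positivity),
      ← Real.rpow_natCast (∏ v ∈ f, x v) r, ← Real.rpow_mul hP]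
    rw [mul_one_div, div_self hrR.ne', Real.rpow_one]
  have ha : (0 : ℝ) < ((1/2 : ℝ) ^ s) ^ ((1 : ℝ) / r) := by positivity
  have hainv : (((1/2 : ℝ) ^ s) ^ ((1 : ℝ) / r))⁻¹ = (2 : ℝ) ^ ((s : ℝ) / r) := by
    rw [show ((1:ℝ)/2) = ((2:ℝ))⁻¹ by norm_num, inv_pow,
      Real.inv_rpow (by positivity), inv_inv,
      ← Real.rpow_natCast (2:ℝ) s, ← Real.rpow_mul (by norm_num), mul_one_div]
  have hsum : ∑ v ∈ f, (1 : ℝ) / r * z v = 1 / r * ∑ v ∈ f, z v := by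
    rw [Finset.mul_sum]
  rw [hlhs, hsum] at amgm
  have h2 : ∏ v ∈ f, x v ≤ (1 / r * ∑ v ∈ f, z v) / (((1/2 : ℝ) ^ s) ^ ((1 : ℝ) / r)) := by
    rw [le_div_iff₀ ha]; exact amgm
  calc ∏ v ∈ f, x v ≤ (1 / r * ∑ v ∈ f, z v) / (((1/2 : ℝ) ^ s) ^ ((1 : ℝ) / r)) := h2
    _ = (((1/2 : ℝ) ^ s) ^ ((1 : ℝ) / r))⁻¹ * (1 / r * ∑ v ∈ f, z v) := by
        rw [div_eq_inv_mul]
    _ = (2 : ℝ) ^ ((s : ℝ) / r) / r * ∑ v ∈ f, z v := by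
        rw [hainv]; ring

/-- The two edge-sums of the weighted `r`-th powers add up to the full sum. -/
private lemma sum_split {V : Type} [DecidableEq V] [Fintype V] (e e' : Finset V)
    (hcov : e ∪ e' = Finset.univ) (g : V → ℝ) :
    ((∑ v ∈ e, g v * (if v ∈ e ∩ e' then (1/2 : ℝ) else 1))
      + ∑ v ∈ e', g v * (if v ∈ e ∩ e' then (1/2 : ℝ) else 1)) = ∑ v, g v := by
  rw [← Finset.sum_union_inter, hcov]
  have h1 : ∑ v ∈ e ∩ e', g v * (if v ∈ e ∩ e' then (1/2 : ℝ) else 1)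
      = ∑ v, (if v ∈ e ∩ e' then g v * (1/2 : ℝ) else 0) := by
    rw [Finset.sum_ite_mem, Finset.univ_inter]
    exact Finset.sum_congr rfl fun v hv => by rw [if_pos hv]
  rw [h1, ← Finset.sum_add_distrib]
  exact Finset.sum_congr rfl fun v _ => by by_cases h : v ∈ e ∩ e' <;> simp [h] <;> ring

/-- The exact value of the spectral radius of two `r`-edges sharing `s` vertices. -/
private lemma specRad_two_edges (r s N : ℕ) (hs : 2 ≤ s) (hsr : s ≤ r - 1)
    (e e' : Finset (Fin N)) (he : e.card = r) (he' : e'.card = r) (hne : e ≠ e')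
    (hint : (e ∩ e').card = s) (hcov : e ∪ e' = Finset.univ) :
    specRad r ({e, e'} : Finset (Finset (Fin N))) =
      (Nat.factorial (r - 1) : ℝ) * (2 : ℝ) ^ ((s : ℝ) / r) := by
  have hr0 : 0 < r := by omega
  have hrR : (0 : ℝ) < r := by exact_mod_cast hr0
  have hfac : (r.factorial : ℝ) = r * ((r - 1).factorial : ℝ) := by
    rw [← Nat.mul_factorial_pred hr0.ne']; push_cast; ring
  set c : ℝ := (Nat.factorial (r - 1) : ℝ) * (2 : ℝ) ^ ((s : ℝ) / r) with hc_def
  set S : Set ℝ := {ρ : ℝ | ∃ x : Fin N → ℝ, (∀ v, 0 ≤ x v) ∧ x ≠ 0 ∧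
    ρ = (Nat.factorial r : ℝ) * (∑ f ∈ ({e, e'} : Finset (Finset (Fin N))), ∏ v ∈ f, x v)
      / (∑ v, x v ^ r)} with hS_def
  -- upper bound
  have hub : ∀ ρ ∈ S, ρ ≤ c := by
    rintro ρ ⟨x, hx, hx0, rfl⟩
    obtain ⟨v0, hv0⟩ := Function.ne_iff.mp hx0
    have hD : 0 < ∑ v, x v ^ r :=
      Finset.sum_pos' (fun v _ => pow_nonneg (hx v) r)
        ⟨v0, Finset.mem_univ v0, pow_pos ((hx v0).lt_of_ne (Ne.symm hv0)) r⟩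
    have hb1 := edge_bound r s hr0 (e ∩ e') e Finset.inter_subset_left hint he x hx
    have hb2 := edge_bound r s hr0 (e ∩ e') e' Finset.inter_subset_right hint he' x hx
    have hnum : (∑ f ∈ ({e, e'} : Finset (Finset (Fin N))), ∏ v ∈ f, x v)
        ≤ (2 : ℝ) ^ ((s : ℝ) / r) / r * ∑ v, x v ^ r := by
      rw [Finset.sum_pair hne, ← sum_split e e' hcov (fun v => x v ^ r), mul_add]
      exact add_le_add hb1 hb2
    rw [div_le_iff₀ hD]
    calc (r.factorial : ℝ) * (∑ f ∈ ({e, e'} : Finset (Finset (Fin N))), ∏ v ∈ f, x v)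
        ≤ (r.factorial : ℝ) * ((2 : ℝ) ^ ((s : ℝ) / r) / r * ∑ v, x v ^ r) := by
          exact mul_le_mul_of_nonneg_left hnum (by positivity)
      _ = c * ∑ v, x v ^ r := by rw [hfac, hc_def]; field_simp
  -- the witness
  set x0 : Fin N → ℝ := fun v => if v ∈ e ∩ e' then (2 : ℝ) ^ ((1 : ℝ) / r) else 1 with hx0_def
  have hx0nn : ∀ v, 0 ≤ x0 v := by intro v; simp only [hx0_def]; split <;> positivity
  have hx0pos : ∀ v, 0 < x0 v := by intro v; simp only [hx0_def]; split <;> positivity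
  have hene : e.Nonempty := Finset.card_pos.mp (by omega)
  obtain ⟨w0, _⟩ := hene
  have hx0ne : x0 ≠ 0 := by
    intro h
    have := congrFun h w0
    exact (hx0pos w0).ne' this
  have hNs : N + s = 2 * r := by
    have h := Finset.card_union_add_card_inter e e'
    rw [hcov, he, he', hint, Finset.card_univ, Fintype.card_fin] at h
    omega
  have hpow : ∀ v, x0 v ^ r = if v ∈ e ∩ e' then (2 : ℝ) else 1 := by
    intro v; simp only [hx0_def]; split
    · rw [← Real.rpow_natCast ((2 : ℝ) ^ ((1 : ℝ) / r)) r, ← Real.rpow_mul (by norm_num),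
        one_div, inv_mul_cancel₀ hrR.ne', Real.rpow_one]
    · exact one_pow r
  have hDval : ∑ v, x0 v ^ r = 2 * r := by
    have : ∑ v, x0 v ^ r = ∑ v : Fin N, ((1 : ℝ) + if v ∈ e ∩ e' then 1 else 0) := by
      refine Finset.sum_congr rfl fun v _ => ?_
      rw [hpow v]; split <;> norm_num
    rw [this, Finset.sum_add_distrib, Finset.sum_const, Finset.sum_ite_mem,
      Finset.univ_inter, Finset.sum_const, hint, Finset.card_univ, Fintype.card_fin,
      nsmul_eq_mul, nsmul_eq_mul, mul_one, mul_one]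
    have : ((N : ℝ) + s) = 2 * r := by exact_mod_cast congrArg (Nat.cast : ℕ → ℝ) hNs
    linarith
  have hPval : ∀ f ∈ ({e, e'} : Finset (Finset (Fin N))),
      ∏ v ∈ f, x0 v = (2 : ℝ) ^ ((s : ℝ) / r) := by
    intro f hf
    have htf : e ∩ e' ⊆ f := by
      simp only [Finset.mem_insert, Finset.mem_singleton] at hf
      rcases hf with rfl | rfl
      · exact Finset.inter_subset_left
      · exact Finset.inter_subset_right
    simp only [hx0_def]
    rw [Finset.prod_ite, Finset.prod_const, Finset.prod_const, one_pow, mul_one,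
      Finset.filter_mem_eq_inter, Finset.inter_eq_right.mpr htf, hint,
      ← Real.rpow_natCast ((2 : ℝ) ^ ((1 : ℝ) / r)) s, ← Real.rpow_mul (by norm_num)]
    congr 1
    ring
  have hcS : c ∈ S := by
    refine ⟨x0, hx0nn, hx0ne, ?_⟩
    rw [Finset.sum_pair hne, hPval e (by simp), hPval e' (by simp), hDval, hfac, hc_def]
    field_simp
    ring
  have h1 : sSup S ≤ c := csSup_le ⟨c, hcS⟩ hub
  have h2 : c ≤ sSup S := le_csSup ⟨c, fun ρ hρ => hub ρ hρ⟩ hcS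
  have : sSup S = c := le_antisymm h1 h2
  exact this

/-- for two `r`-edges meeting in exactly `s` vertices (`2 ≤ s ≤ r−1`),
the weights `1/2` on shared incidences and `1` elsewhere give vertex sums `1` and
edge products `(1/2)^s ≤ 1/4` (strict iff `s > 2`); consequently
`ρ(G_s^{(r)}) ≥ (r−1)!·4^{1/r}`, with equality iff `s = 2`. -/
theorem two_edge_intersection_specRad (r s N : ℕ) (hs : 2 ≤ s) (hsr : s ≤ r - 1)
    (e e' : Finset (Fin N)) (he : e.card = r) (he' : e'.card = r) (hne : e ≠ e')
    (hint : (e ∩ e').card = s) (hcov : e ∪ e' = Finset.univ) :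
    (∀ v : Fin N, ∑ f ∈ ({e, e'} : Finset (Finset (Fin N))).filter (fun f => v ∈ f),
        (if v ∈ e ∩ e' then (1/2 : ℝ) else 1) = 1) ∧
    (∀ f ∈ ({e, e'} : Finset (Finset (Fin N))),
        ∏ v ∈ f, (if v ∈ e ∩ e' then (1/2 : ℝ) else 1) = (1/2 : ℝ) ^ s) ∧
    ((1/2 : ℝ) ^ s ≤ 1/4) ∧ (((1/2 : ℝ) ^ s < 1/4) ↔ 2 < s) ∧
    (Nat.factorial (r - 1) : ℝ) * (4 : ℝ) ^ ((1 : ℝ) / r) ≤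
      specRad r ({e, e'} : Finset (Finset (Fin N))) ∧
    (specRad r ({e, e'} : Finset (Finset (Fin N))) =
        (Nat.factorial (r - 1) : ℝ) * (4 : ℝ) ^ ((1 : ℝ) / r) ↔ s = 2) := by
  have hr0 : 0 < r := by omega
  have hrR : (0 : ℝ) < r := by exact_mod_cast hr0
  have hspec := specRad_two_edges r s N hs hsr e e' he he' hne hint hcov
  refine ⟨?_, ?_, ?_, ?_, ?_, ?_⟩
  · -- vertex sums equal 1
    intro v
    have hv : v ∈ e ∪ e' := hcov ▸ Finset.mem_univ v
    rw [Finset.mem_union] at hv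
    rw [Finset.sum_const]
    by_cases h1 : v ∈ e <;> by_cases h2 : v ∈ e'
    · have hfil : ({e, e'} : Finset (Finset (Fin N))).filter (fun f => v ∈ f) = {e, e'} := by
        apply Finset.filter_true_of_mem
        intro f hf
        simp only [Finset.mem_insert, Finset.mem_singleton] at hf
        rcases hf with rfl | rfl <;> assumption
      rw [hfil, if_pos (Finset.mem_inter.mpr ⟨h1, h2⟩)]
      rw [Finset.card_pair hne]
      norm_num
    · have hfil : ({e, e'} : Finset (Finset (Fin N))).filter (fun f => v ∈ f) = {e} := by
        ext f
        simp only [Finset.mem_filter, Finset.mem_insert, Finset.mem_singleton]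
        constructor
        · rintro ⟨rfl | rfl, hvf⟩
          · rfl
          · exact absurd hvf h2
        · rintro rfl; exact ⟨Or.inl rfl, h1⟩
      rw [hfil, if_neg (fun hm => h2 (Finset.mem_inter.mp hm).2)]
      simp
    · have hfil : ({e, e'} : Finset (Finset (Fin N))).filter (fun f => v ∈ f) = {e'} := by
        ext f
        simp only [Finset.mem_filter, Finset.mem_insert, Finset.mem_singleton]
        constructor
        · rintro ⟨rfl | rfl, hvf⟩
          · exact absurd hvf h1
          · rfl
        · rintro rfl; exact ⟨Or.inr rfl, h2⟩
      rw [hfil, if_neg (fun hm => h1 (Finset.mem_inter.mp hm).1)]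
      simp
    · exact absurd hv (by tauto)
  · -- edge products
    intro f hf
    have htf : e ∩ e' ⊆ f := by
      simp only [Finset.mem_insert, Finset.mem_singleton] at hf
      rcases hf with rfl | rfl
      · exact Finset.inter_subset_left
      · exact Finset.inter_subset_right
    rw [Finset.prod_ite, Finset.prod_const, Finset.prod_const, one_pow, mul_one,
      Finset.filter_mem_eq_inter, Finset.inter_eq_right.mpr htf, hint]
  · -- (1/2)^s ≤ 1/4
    calc (1/2 : ℝ) ^ s ≤ (1/2 : ℝ) ^ 2 :=
          pow_le_pow_of_le_one (by norm_num) (by norm_num) hs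
      _ = 1/4 := by norm_num
  · -- strict iff s > 2
    constructor
    · intro h
      by_contra hc
      have hs2 : s = 2 := by omega
      rw [hs2] at h
      norm_num at h
    · intro h
      calc (1/2 : ℝ) ^ s < (1/2 : ℝ) ^ 2 :=
            pow_lt_pow_right_of_lt_one₀ (by norm_num) (by norm_num) h
        _ = 1/4 := by norm_num
  · -- lower bound on spectral radius
    rw [hspec, four_rpow]
    apply mul_le_mul_of_nonneg_left _ (by positivity)
    rw [Real.rpow_le_rpow_left_iff one_lt_two]
    gcongr
    exact_mod_cast hs
  · -- equality iff s = 2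
    rw [hspec, four_rpow]
    constructor
    · intro h
      have hfacne : ((Nat.factorial (r - 1) : ℝ)) ≠ 0 := by positivity
      have h2 : (2 : ℝ) ^ ((s : ℝ) / r) = (2 : ℝ) ^ ((2 : ℝ) / r) :=
        mul_left_cancel₀ hfacne h
      have h3 : (s : ℝ) / r = (2 : ℝ) / r := by
        by_contra hne3
        rcases lt_or_gt_of_ne hne3 with hlt | hgt
        · exact absurd h2 (ne_of_lt ((Real.rpow_lt_rpow_left_iff one_lt_two).mpr hlt))
        · exact absurd h2 (ne_of_gt ((Real.rpow_lt_rpow_left_iff one_lt_two).mpr hgt))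
      have h4 : (s : ℝ) = 2 := by
        field_simp at h3
        exact h3
      exact_mod_cast h4
    · intro h
      rw [h]
      norm_num
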